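/- Let B = {b_1,…,b_n} be a geometrically fast set of positive bumps on [0,1] with markers M = {c_1,…,c_n} witnessing fastness. If w is a word over B^± whose evaluation is the identity homeomorphism of [0,1], then for every point x ∈ M⟨B⟩, the image of the simply local reduction w_x under the canonical map from words over B^± to the free group on n generators (sending the letter b_i^{±1} to the i-th generator to the power ±1) is the trivial element; that is, w_x freely reduces to the empty word. -/

import Mathlib

open scoped Classical

/-- The group of orientation-preserving homeomorphisms of `[0,1]`, modeled as
order-isomorphisms of the unit interval. -/
abbrev Homeo := unitInterval ≃o unitInterval

/-- `f` is a positive bump with orbital `(a,b)`. -/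
def IsPosBump (f : Homeo) (a b : ℝ) : Prop :=
  0 ≤ a ∧ a < b ∧ b ≤ 1 ∧
  (∀ x : unitInterval, (x : ℝ) ≤ (f x : ℝ)) ∧
  (∀ x : unitInterval, f x ≠ x ↔ a < (x : ℝ) ∧ (x : ℝ) < b)

/-- The feet of a bump `f` with orbital `(a,b)` and marker `c`: the source (`false`)
is `(a,c)` and the destination (`true`) is `[f(c), b)`. -/
def Foot (f : Homeo) (a b : ℝ) (c : unitInterval) : Bool → Set ℝ
  | false => Set.Ioo a (c : ℝ)
  | true => Set.Ico ((f c : unitInterval) : ℝ) b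

/-- The evaluation of a formal letter: `(i, true)` stands for `b i`, and `(i, false)`
for `(b i)⁻¹` (matching the convention of `FreeGroup.mk`). -/
def letterEval {n : ℕ} (b : Fin n → Homeo) (ℓ : Fin n × Bool) : Homeo :=
  if ℓ.2 then b ℓ.1 else (b ℓ.1)⁻¹

/-- Evaluation of a word at a point, applying the letters from left to right. -/
def wordApply {n : ℕ} (b : Fin n → Homeo) : List (Fin n × Bool) → unitInterval → unitInterval
  | [], x => x
  | ℓ :: rest, x => wordApply b rest (letterEval b ℓ x)

/-- The simply local reduction `w_x` of a word `w` at a point `x`: scan the letters left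
to right, deleting a letter exactly when the current image of `x` is fixed by it. -/
noncomputable def slr {n : ℕ} (b : Fin n → Homeo) :
    List (Fin n × Bool) → unitInterval → List (Fin n × Bool)
  | [], _ => []
  | ℓ :: rest, x =>
      if letterEval b ℓ x = x then slr b rest x
      else ℓ :: slr b rest (letterEval b ℓ x)


namespace SlrAux
set_option linter.unusedSectionVars false
variable {n : ℕ} {b : Fin n → Homeo} {a d : Fin n → ℝ} {c : Fin n → unitInterval}

/-- every letter moves the running point -/
def AllMoving (b : Fin n → Homeo) : List (Fin n × Bool) → unitInterval → Prop
  | [], _ => True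
  | ℓ :: t, x => letterEval b ℓ x ≠ x ∧ AllMoving b t (letterEval b ℓ x)

@[simp] lemma allMoving_nil (x : unitInterval) : AllMoving b [] x := trivial
@[simp] lemma allMoving_cons (ℓ) (t) (x : unitInterval) :
    AllMoving b (ℓ :: t) x ↔ letterEval b ℓ x ≠ x ∧ AllMoving b t (letterEval b ℓ x) := Iff.rfl

@[simp] lemma wordApply_nil (x : unitInterval) : wordApply b [] x = x := rfl
@[simp] lemma wordApply_cons (ℓ) (t) (x : unitInterval) :
    wordApply b (ℓ :: t) x = wordApply b t (letterEval b ℓ x) := rfl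

lemma wordApply_append (l₁ l₂ : List (Fin n × Bool)) (x : unitInterval) :
    wordApply b (l₁ ++ l₂) x = wordApply b l₂ (wordApply b l₁ x) := by
  induction l₁ generalizing x with
  | nil => simp
  | cons ℓ t ih => simp [ih]

lemma allMoving_append (l₁ l₂ : List (Fin n × Bool)) (x : unitInterval) :
    AllMoving b (l₁ ++ l₂) x ↔ AllMoving b l₁ x ∧ AllMoving b l₂ (wordApply b l₁ x) := by
  induction l₁ generalizing x with
  | nil => simp
  | cons ℓ t ih => simp [ih, and_assoc]

@[simp] lemma letterEval_flip (ℓ : Fin n × Bool) (x : unitInterval) :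
    letterEval b (ℓ.1, !ℓ.2) (letterEval b ℓ x) = x := by
  rcases ℓ with ⟨i, _ | _⟩ <;> simp [letterEval]

lemma slr_append (l₁ l₂ : List (Fin n × Bool)) (x : unitInterval) :
    slr b (l₁ ++ l₂) x = slr b l₁ x ++ slr b l₂ (wordApply b l₁ x) := by
  induction l₁ generalizing x with
  | nil => simp [slr]
  | cons ℓ t ih =>
      by_cases h : letterEval b ℓ x = x
      · simp [slr, h, ih, h]
      · simp [slr, h, ih]

lemma allMoving_slr (l : List (Fin n × Bool)) (x : unitInterval) :
    AllMoving b (slr b l x) x := by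
  induction l generalizing x with
  | nil => simp [slr]
  | cons ℓ t ih =>
      by_cases h : letterEval b ℓ x = x
      · simpa [slr, h] using ih x
      · simp [slr, h, ih]

lemma wordApply_slr (l : List (Fin n × Bool)) (x : unitInterval) :
    wordApply b (slr b l x) x = wordApply b l x := by
  induction l generalizing x with
  | nil => simp [slr]
  | cons ℓ t ih =>
      by_cases h : letterEval b ℓ x = x
      · simp [slr, h, ih, h]
      · simp [slr, h, ih]

lemma invRev_cons (ℓ : Fin n × Bool) (t : List (Fin n × Bool)) :
    FreeGroup.invRev (ℓ :: t) = FreeGroup.invRev t ++ [(ℓ.1, !ℓ.2)] := by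
  simp [FreeGroup.invRev]

lemma wordApply_invRev (u : List (Fin n × Bool)) (x : unitInterval) :
    wordApply b (FreeGroup.invRev u) (wordApply b u x) = x := by
  induction u generalizing x with
  | nil => simp [FreeGroup.invRev]
  | cons ℓ t ih =>
      simp [invRev_cons, wordApply_append, ih]

lemma slr_invRev (u : List (Fin n × Bool)) (x : unitInterval) :
    slr b (FreeGroup.invRev u) (wordApply b u x) = FreeGroup.invRev (slr b u x) := by
  induction u generalizing x with
  | nil => simp [FreeGroup.invRev, slr]
  | cons ℓ t ih =>
      rw [invRev_cons, wordApply_cons, slr_append, ih, wordApply_invRev]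
      by_cases h : letterEval b ℓ x = x
      · have h2 : letterEval b (ℓ.1, !ℓ.2) x = x := by
          conv_lhs => rw [← h]
          rw [letterEval_flip]
        simp [slr, h, h2]
      · have h2 : letterEval b (ℓ.1, !ℓ.2) (letterEval b ℓ x) ≠ letterEval b ℓ x := by
          rw [letterEval_flip]; exact fun hq => h hq.symm
        have h3 : ¬ x = letterEval b ℓ x := fun hq => h hq.symm
        simp [slr, h, h2, h3, invRev_cons]

/-- freely reduced: no adjacent inverse pair -/
def Reduced (l : List (Fin n × Bool)) : Prop :=
  List.Chain' (fun p q => q ≠ (p.1, !p.2)) l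

lemma not_reduced_split {l : List (Fin n × Bool)} (h : ¬ Reduced l) :
    ∃ l₁ p l₂, l = l₁ ++ p :: (p.1, !p.2) :: l₂ := by
  induction l with
  | nil => exact absurd List.isChain_nil h
  | cons ℓ t ih =>
      match t, h with
      | [], h => exact absurd (List.isChain_singleton ℓ) h
      | ℓ₂ :: t₂, h =>
          rw [Reduced, List.Chain', List.isChain_cons_cons] at h
          push_neg at h
          by_cases h1 : ℓ₂ = (ℓ.1, !ℓ.2)
          · exact ⟨[], ℓ, t₂, by simp [h1]⟩
          · obtain ⟨l₁, p, l₂, hsplit⟩ := ih (h h1)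
            exact ⟨ℓ :: l₁, p, l₂, by simp [hsplit]⟩



def FtL (b : Fin n → Homeo) (a d : Fin n → ℝ) (c : Fin n → unitInterval)
    (ℓ : Fin n × Bool) : Set ℝ :=
  Foot (b ℓ.1) (a ℓ.1) (d ℓ.1) (c ℓ.1) ℓ.2

section geom
variable (hb : ∀ i, IsPosBump (b i) (a i) (d i))
  (hc : ∀ i, a i < (c i : ℝ) ∧ (c i : ℝ) < d i)
  (hdisj : ∀ p q : Fin n × Bool, p ≠ q →
      Disjoint (Foot (b p.1) (a p.1) (d p.1) (c p.1) p.2)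
        (Foot (b q.1) (a q.1) (d q.1) (c q.1) q.2))
include hb

lemma le_apply (i : Fin n) (x : unitInterval) : (x : ℝ) ≤ (b i x : ℝ) := (hb i).2.2.2.1 x
lemma moved_iff (i : Fin n) (x : unitInterval) :
    b i x ≠ x ↔ a i < (x : ℝ) ∧ (x : ℝ) < d i := (hb i).2.2.2.2 x

/-- the right endpoint of the orbital, as a point of the interval -/
noncomputable def Dpt (i : Fin n) : unitInterval := ⟨d i, by
  constructor
  · exact le_trans (hb i).1 (le_of_lt (hb i).2.1)
  · exact (hb i).2.2.1⟩

lemma apply_Dpt (i : Fin n) : b i (Dpt hb i) = Dpt hb i := by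
  by_contra h
  exact absurd ((moved_iff hb i _).1 h).2 (lt_irrefl _)

lemma apply_lt_d {i : Fin n} {x : unitInterval} (h : (x : ℝ) < d i) : (b i x : ℝ) < d i := by
  have hx : x < Dpt hb i := Subtype.coe_lt_coe.1 h
  have := (b i).lt_iff_lt.2 hx
  rw [apply_Dpt hb] at this
  exact Subtype.coe_lt_coe.2 this

lemma letter_moved_orbital {ℓ : Fin n × Bool} {y : unitInterval}
    (h : letterEval b ℓ y ≠ y) : a ℓ.1 < (y : ℝ) ∧ (y : ℝ) < d ℓ.1 := by
  rcases ℓ with ⟨i, _ | _⟩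
  · -- inverse letter
    simp only [letterEval, if_neg Bool.false_ne_true] at h ⊢
    set z := (b i)⁻¹ y with hz
    have hby : b i z = y := by simp [hz]
    have hmz : b i z ≠ z := by rw [hby]; exact fun hq => h (hq ▸ by simp [hz, ← hq, hby])
    have hoz := (moved_iff hb i z).1 hmz
    refine ⟨lt_of_lt_of_le hoz.1 (by rw [← hby] at *; exact le_apply hb i z), ?_⟩
    rw [← hby]
    exact apply_lt_d hb hoz.2
  · simpa only [letterEval, if_pos rfl] using (moved_iff hb i y).1 h

omit hb in
include hdisj in
lemma foot_eq {p q : Fin n × Bool} {y : ℝ} (hp : y ∈ FtL b a d c p) (hq : y ∈ FtL b a d c q) :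
    p = q := by
  by_contra h
  exact Set.disjoint_left.1 (hdisj p q h) hp hq

/-- ping-pong step -/
lemma step {ℓ : Fin n × Bool} {y : unitInterval} (hm : letterEval b ℓ y ≠ y)
    (hnb : (y : ℝ) ∉ FtL b a d c (ℓ.1, !ℓ.2)) :
    ((letterEval b ℓ y : unitInterval) : ℝ) ∈ FtL b a d c ℓ := by
  have horb := letter_moved_orbital hb hm
  rcases ℓ with ⟨i, _ | _⟩
  · -- b i ⁻¹ : want source
    simp only [letterEval, if_neg Bool.false_ne_true] at hm ⊢
    simp only [FtL, Foot, Bool.not_false] at hnb ⊢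
    set z := (b i)⁻¹ y with hz
    have hby : b i z = y := by simp [hz]
    have hylt : (y : ℝ) < (b i (c i) : ℝ) := by
      by_contra hle
      exact hnb ⟨le_of_not_gt hle, horb.2⟩
    have hzc : (z : ℝ) < (c i : ℝ) := by
      by_contra hle
      have : b i (c i) ≤ b i z := (b i).le_iff_le.2 (Subtype.coe_le_coe.1 (le_of_not_gt hle))
      rw [hby] at this
      exact absurd (lt_of_le_of_lt (Subtype.coe_le_coe.2 this) hylt) (lt_irrefl _)
    have hmz : b i z ≠ z := by
      rw [hby]; exact fun hq => hm hq.symm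
    exact ⟨((moved_iff hb i z).1 hmz).1, hzc⟩
  · -- b i : want destination
    simp only [letterEval, if_pos rfl] at hm ⊢
    simp only [FtL, Foot, Bool.not_true] at hnb ⊢
    have hcy : (c i : ℝ) ≤ (y : ℝ) := by
      by_contra hlt
      exact hnb ⟨horb.1, lt_of_not_ge hlt⟩
    exact ⟨Subtype.coe_le_coe.2 ((b i).le_iff_le.2 (Subtype.coe_le_coe.1 hcy)),
      apply_lt_d hb horb.2⟩

include hc hdisj in
lemma marker_not_source (p : Fin n) (j : Fin n) :
    ((c p : ℝ)) ∉ FtL b a d c (j, false) := by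
  rintro ⟨h1, h2⟩
  have hmax : max (a p) (a j) < (c p : ℝ) := max_lt (hc p).1 h1
  obtain ⟨s, hs1, hs2⟩ := exists_between hmax
  have hpf : s ∈ FtL b a d c (p, false) := ⟨lt_of_le_of_lt (le_max_left _ _) hs1, hs2⟩
  have hjf : s ∈ FtL b a d c (j, false) :=
    ⟨lt_of_le_of_lt (le_max_right _ _) hs1, lt_trans hs2 h2⟩
  have := foot_eq hdisj hpf hjf
  have hpj : p = j := by simpa using this
  subst hpj
  exact absurd h2 (lt_irrefl _)

include hc hdisj in
lemma marker_in_dest {p j : Fin n} (h : ((c p : ℝ)) ∈ FtL b a d c (j, true)) :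
    c p = b j (c j) := by
  obtain ⟨h1, h2⟩ := h
  rcases eq_or_lt_of_le h1 with heq | hlt
  · exact Subtype.ext heq.symm
  · exfalso
    have hmax : max (a p) ((b j (c j) : ℝ)) < (c p : ℝ) := max_lt (hc p).1 hlt
    obtain ⟨s, hs1, hs2⟩ := exists_between hmax
    have hpf : s ∈ FtL b a d c (p, false) := ⟨lt_of_le_of_lt (le_max_left _ _) hs1, hs2⟩
    have hjf : s ∈ FtL b a d c (j, true) :=
      ⟨le_of_lt (lt_of_le_of_lt (le_max_right _ _) hs1), lt_trans hs2 h2⟩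
    have := foot_eq hdisj hpf hjf
    simp at this

include hc in
lemma bcc_mem_dest (i : Fin n) : ((b i (c i) : unitInterval) : ℝ) ∈ FtL b a d c (i, true) :=
  ⟨le_refl _, apply_lt_d hb (hc i).2⟩

include hc hdisj in
lemma dest_unique {i j : Fin n} (h : b i (c i) = b j (c j)) : i = j := by
  have h1 := bcc_mem_dest hb hc i
  have h2 := bcc_mem_dest hb hc j
  rw [← h] at h2
  have := foot_eq hdisj h1 h2
  simpa using this

include hc hdisj in
lemma marker_inj {p q : Fin n} (h : c p = c q) : p = q := by
  by_contra hpq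
  have hmax : max (a p) (a q) < (c p : ℝ) := max_lt (hc p).1 (h ▸ (hc q).1)
  obtain ⟨s, hs1, hs2⟩ := exists_between hmax
  have hpf : s ∈ FtL b a d c (p, false) := ⟨lt_of_le_of_lt (le_max_left _ _) hs1, hs2⟩
  have hqf : s ∈ FtL b a d c (q, false) :=
    ⟨lt_of_le_of_lt (le_max_right _ _) hs1, h ▸ hs2⟩
  have := foot_eq hdisj hpf hqf
  simp at this
  exact hpq this

include hc in
lemma marker_lt_bcc (i : Fin n) : (c i : ℝ) < (b i (c i) : ℝ) := by
  have hne : b i (c i) ≠ c i := (moved_iff hb i (c i)).2 (hc i)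
  exact lt_of_le_of_ne (le_apply hb i (c i)) fun hq => hne (Subtype.ext hq.symm)


include hb hdisj

lemma a_run : ∀ (v : List (Fin n × Bool)) (y : unitInterval) (ℓta : Fin n × Bool),
    Reduced v → AllMoving b v y → (y : ℝ) ∈ FtL b a d c ℓta →
    (∀ ℓ' t, v = ℓ' :: t → ℓ' ≠ (ℓta.1, !ℓta.2)) →
    v = [] ∨ ∃ v₃ ℓ', v = v₃ ++ [ℓ'] ∧
      ((wordApply b v y : unitInterval) : ℝ) ∈ FtL b a d c ℓ' := by
  intro v
  induction v with
  | nil => intros; exact Or.inl rfl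
  | cons ℓ t ih =>
      intro y ℓta hr hm hy hh
      right
      have hmv : letterEval b ℓ y ≠ y := hm.1
      have hnb : (y : ℝ) ∉ FtL b a d c (ℓ.1, !ℓ.2) := by
        intro hmem
        have heq : (ℓ.1, !ℓ.2) = ℓta := (foot_eq hdisj) hmem hy
        apply hh ℓ t rfl
        rw [← heq]
        simp
      have hy1 := step hb hmv hnb
      have hh' : ∀ ℓ' t', t = ℓ' :: t' → ℓ' ≠ (ℓ.1, !ℓ.2) := by
        intro ℓ' t' heq
        subst heq
        exact (List.isChain_cons_cons.1 hr).1
      rcases ih (letterEval b ℓ y) ℓ hr.tail hm.2 hy1 hh' with h0 | ⟨v₃, ℓ', hsplit, hmem⟩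
      · subst h0
        exact ⟨[], ℓ, rfl, by simpa using hy1⟩
      · exact ⟨ℓ :: v₃, ℓ', by rw [hsplit]; rfl, by simpa [hsplit] using hmem⟩

include hc

lemma ascent : ∀ (m : ℕ) (v : List (Fin n × Bool)) (y : unitInterval) (q : Fin n),
    v.length ≤ m → Reduced v → AllMoving b v y → v ≠ [] →
    (∀ ℓ' t, v = ℓ' :: t → (y : ℝ) ∉ FtL b a d c (ℓ'.1, !ℓ'.2)) →
    wordApply b v y = c q → (y : ℝ) < (c q : ℝ) := by
  intro m
  induction m with
  | zero =>
      intro v y q hlen _ _ hne _ _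
      exact absurd (List.length_eq_zero_iff.1 (Nat.le_zero.1 hlen)) hne
  | succ m ihm =>
      rintro (_ | ⟨ℓ, t⟩) y q hlen hr hm hne hnb hend
      · exact absurd rfl hne
      have hmv : letterEval b ℓ y ≠ y := hm.1
      have hy1 := step hb hmv (hnb ℓ t rfl)
      have hh' : ∀ ℓ' t', t = ℓ' :: t' → ℓ' ≠ (ℓ.1, !ℓ.2) := by
        intro ℓ' t' heq; subst heq; exact (List.isChain_cons_cons.1 hr).1
      rcases a_run hb hdisj t (letterEval b ℓ y) ℓ hr.tail hm.2 hy1 hh'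
        with h0 | ⟨v₃, ℓ', hsplit, hmem⟩
      · -- t = [], endpoint is letterEval ℓ y = c q ∈ FtL ℓ
        subst h0
        have hyq : letterEval b ℓ y = c q := hend
        rw [hyq] at hy1
        rcases ℓ with ⟨i, _ | _⟩
        · exact absurd hy1 ((marker_not_source hb hc hdisj) q i)
        · have hcq : c q = b i (c i) := (marker_in_dest hb hc hdisj) hy1
          have : b i y = b i (c i) := by
            have : letterEval b (i, true) y = b i y := by simp [letterEval]
            rw [← this, hyq, hcq]
          have hyc : y = c i := (b i).injective this
          calc (y : ℝ) = (c i : ℝ) := by rw [hyc]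
            _ < (b i (c i) : ℝ) := (marker_lt_bcc hb hc) i
            _ = (c q : ℝ) := by rw [hcq]
      · -- t = v₃ ++ [ℓ']
        have hvsplit : ℓ :: t = (ℓ :: v₃) ++ [ℓ'] := by rw [hsplit]; rfl
        have hendmem : ((wordApply b (ℓ :: t) y : unitInterval) : ℝ) ∈ FtL b a d c ℓ' := by
          simpa [hsplit] using hmem
        rw [hend] at hendmem
        rcases ℓ' with ⟨i, _ | _⟩
        · exact absurd hendmem ((marker_not_source hb hc hdisj) q i)
        · have hcq : c q = b i (c i) := (marker_in_dest hb hc hdisj) hendmem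
          set z := wordApply b (ℓ :: v₃) y with hz
          have hbz : b i z = c q := by
            have h1 : wordApply b (ℓ :: t) y = letterEval b (i, true) z := by
              rw [hvsplit, wordApply_append]; rfl
            have : letterEval b (i, true) z = b i z := by simp [letterEval]
            rw [← this, ← h1, hend]
          have hzc : z = c i := by
            apply (b i).injective
            rw [hbz, hcq]
          have hlen' : (ℓ :: v₃).length ≤ m := by
            have : (ℓ :: t).length = (ℓ :: v₃).length + 1 := by rw [hvsplit]; simp
            omega
          have hr' : Reduced (ℓ :: v₃) := by
            rw [hvsplit] at hr
            exact (List.isChain_append.1 hr).1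
          have hm' : AllMoving b (ℓ :: v₃) y := by
            rw [hvsplit] at hm
            exact ((allMoving_append _ _ _).1 hm).1
          have hnb' : ∀ ℓ'' t'', ℓ :: v₃ = ℓ'' :: t'' → (y : ℝ) ∉ FtL b a d c (ℓ''.1, !ℓ''.2) := by
            intro ℓ'' t'' heq
            rw [List.cons_eq_cons] at heq
            rw [← heq.1]
            exact hnb ℓ t rfl
          have := ihm (ℓ :: v₃) y i hlen' hr' hm' (by simp) hnb' hzc
          calc (y : ℝ) < (c i : ℝ) := this
            _ < (b i (c i) : ℝ) := (marker_lt_bcc hb hc) i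
            _ = (c q : ℝ) := by rw [hcq]

lemma endAnalysis : ∀ (m : ℕ) (v : List (Fin n × Bool)) (p q : Fin n),
    v.length ≤ m → Reduced v → AllMoving b v (c p) → v ≠ [] →
    wordApply b v (c p) = c q →
    (∃ v₃ i, v = v₃ ++ [(i, true)] ∧ c q = b i (c i) ∧ wordApply b v₃ (c p) = c i) ∨
      ((c q : ℝ) < (c p : ℝ)) := by
  intro m
  induction m with
  | zero =>
      intro v p q hlen _ _ hne _
      exact absurd (List.length_eq_zero_iff.1 (Nat.le_zero.1 hlen)) hne
  | succ m ihm =>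
      rintro (_ | ⟨ℓ, t⟩) p q hlen hr hm hne hend
      · exact absurd rfl hne
      have hmv : letterEval b ℓ (c p) ≠ c p := hm.1
      by_cases hblk : ((c p : ℝ)) ∈ FtL b a d c (ℓ.1, !ℓ.2)
      · -- blocked: ℓ = (j, false) and c p = b j (c j)
        rcases ℓ with ⟨j, bj⟩
        rcases bj with _ | _
        rotate_left
        · exact absurd hblk ((marker_not_source hb hc hdisj) p j)
        simp only [Bool.not_false] at hblk
        have hcp : c p = b j (c j) := (marker_in_dest hb hc hdisj) hblk
        have hy1 : letterEval b (j, false) (c p) = c j := by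
          simp only [letterEval, if_neg Bool.false_ne_true]
          rw [hcp]
          simp
        rcases eq_or_ne t [] with ht | ht
        · subst ht
          have : c j = c q := by rw [← hy1]; exact hend
          right
          calc (c q : ℝ) = (c j : ℝ) := by rw [this]
            _ < (b j (c j) : ℝ) := (marker_lt_bcc hb hc) j
            _ = (c p : ℝ) := by rw [hcp]
        · have hm' : AllMoving b t (c j) := by rw [← hy1]; exact hm.2
          have hend' : wordApply b t (c j) = c q := by rw [← hy1]; exact hend
          rcases ihm t j q (by simp only [List.length_cons] at hlen; omega)
              hr.tail hm' ht hend' with ⟨v₃, i, hsplit, hcq, hv₃⟩ | hlt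
          · left
            refine ⟨(j, false) :: v₃, i, by rw [hsplit]; rfl, hcq, ?_⟩
            rw [wordApply_cons, hy1, hv₃]
          · right
            calc (c q : ℝ) < (c j : ℝ) := hlt
              _ < (b j (c j) : ℝ) := (marker_lt_bcc hb hc) j
              _ = (c p : ℝ) := by rw [hcp]
      · -- not blocked
        left
        have hy1 := step hb hmv hblk
        have hh' : ∀ ℓ' t', t = ℓ' :: t' → ℓ' ≠ (ℓ.1, !ℓ.2) := by
          intro ℓ' t' heq; subst heq; exact (List.isChain_cons_cons.1 hr).1
        rcases a_run hb hdisj t (letterEval b ℓ (c p)) ℓ hr.tail hm.2 hy1 hh'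
          with h0 | ⟨v₃, ℓ', hsplit, hmem⟩
        · subst h0
          have hyq : letterEval b ℓ (c p) = c q := hend
          rw [hyq] at hy1
          rcases ℓ with ⟨i, _ | _⟩
          · exact absurd hy1 ((marker_not_source hb hc hdisj) q i)
          · have hcq : c q = b i (c i) := (marker_in_dest hb hc hdisj) hy1
            refine ⟨[], i, rfl, hcq, ?_⟩
            have : b i (c p) = b i (c i) := by
              have h2 : letterEval b (i, true) (c p) = b i (c p) := by simp [letterEval]
              rw [← h2, hyq, hcq]
            simpa using (b i).injective this
        · have hvsplit : ℓ :: t = (ℓ :: v₃) ++ [ℓ'] := by rw [hsplit]; rfl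
          have hendmem : ((wordApply b (ℓ :: t) (c p) : unitInterval) : ℝ) ∈ FtL b a d c ℓ' := by
            simpa [hsplit] using hmem
          rw [hend] at hendmem
          rcases ℓ' with ⟨i, _ | _⟩
          · exact absurd hendmem ((marker_not_source hb hc hdisj) q i)
          · have hcq : c q = b i (c i) := (marker_in_dest hb hc hdisj) hendmem
            refine ⟨ℓ :: v₃, i, hvsplit, hcq, ?_⟩
            apply (b i).injective
            have h1 : wordApply b (ℓ :: t) (c p) = b i (wordApply b (ℓ :: v₃) (c p)) := by
              rw [hvsplit, wordApply_append]
              simp [letterEval]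
            rw [← h1, hend, hcq]

lemma loop : ∀ (m : ℕ) (v : List (Fin n × Bool)) (p : Fin n),
    v.length ≤ m → Reduced v → AllMoving b v (c p) →
    wordApply b v (c p) = c p → v = [] := by
  intro m
  induction m with
  | zero =>
      intro v p hlen _ _ _
      exact List.length_eq_zero_iff.1 (Nat.le_zero.1 hlen)
  | succ m ihm =>
      rintro (_ | ⟨ℓ, t⟩) p hlen hr hm hend
      · rfl
      exfalso
      by_cases hblk : ((c p : ℝ)) ∈ FtL b a d c (ℓ.1, !ℓ.2)
      · -- blocked
        rcases ℓ with ⟨j, bj⟩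
        rcases bj with _ | _
        rotate_left
        · exact absurd hblk ((marker_not_source hb hc hdisj) p j)
        simp only [Bool.not_false] at hblk
        have hcp : c p = b j (c j) := (marker_in_dest hb hc hdisj) hblk
        rcases endAnalysis hb hc hdisj (m + 1) ((j, false) :: t) p p hlen hr hm (by simp) hend
          with ⟨v₃, i, hsplit, hcq, hv₃⟩ | hlt
        · have hij' : i = j := by
            apply dest_unique hb hc hdisj
            rw [← hcq, ← hcp]
          subst hij'
          rcases v₃ with _ | ⟨ℓ₀, v₄⟩
          · rw [List.nil_append, List.cons_eq_cons] at hsplit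
            exact absurd hsplit.1 (by simp)
          · rw [List.cons_append, List.cons_eq_cons] at hsplit
            obtain ⟨hℓ₀, ht⟩ := hsplit
            have hy1 : letterEval b (i, false) (c p) = c i := by
              simp only [letterEval, if_neg Bool.false_ne_true]
              rw [hcp]; simp
            have hm4 : AllMoving b v₄ (c i) := by
              have h5 := hm.2
              rw [hy1, ht, allMoving_append] at h5
              exact h5.1
            have hr4 : Reduced v₄ := by
              have h5 := hr.tail
              simp only [List.tail_cons] at h5
              rw [ht] at h5
              exact (List.isChain_append.1 h5).1
            have hv₄end : wordApply b v₄ (c i) = c i := by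
              have h5 : wordApply b ((i, false) :: v₄) (c p) = c i := by
                rw [hℓ₀]; exact hv₃
              rw [wordApply_cons, hy1] at h5
              exact h5
            have hlen4 : v₄.length ≤ m := by
              have h5 : t.length = v₄.length + 1 := by rw [ht]; simp
              simp only [List.length_cons] at hlen
              omega
            have hv4nil : v₄ = [] := ihm v₄ i hlen4 hr4 hm4 hv₄end
            subst hv4nil
            have h6 : t = [(i, true)] := by simpa using ht
            rw [h6] at hr
            have h7 := (List.isChain_cons_cons.1 hr).1
            simp at h7
        · exact absurd hlt (lt_irrefl _)
      · -- not blocked: ascent gives c p < c p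
        have hnb : ∀ ℓ' t', ℓ :: t = ℓ' :: t' → ((c p : ℝ)) ∉ FtL b a d c (ℓ'.1, !ℓ'.2) := by
          intro ℓ' t' heq
          rw [List.cons_eq_cons] at heq
          rw [← heq.1]
          exact hblk
        exact absurd (ascent hb hc hdisj (m + 1) (ℓ :: t) (c p) p hlen hr hm (by simp) hnb hend)
          (lt_irrefl _)

lemma marker_mk : ∀ (m : ℕ) (v : List (Fin n × Bool)) (p : Fin n),
    v.length ≤ m → AllMoving b v (c p) → wordApply b v (c p) = c p →
    FreeGroup.mk v = 1 := by
  intro m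
  induction m with
  | zero =>
      intro v p hlen _ _
      rw [List.length_eq_zero_iff.1 (Nat.le_zero.1 hlen)]
      exact FreeGroup.one_eq_mk.symm
  | succ m ihm =>
      intro v p hlen hm hend
      by_cases hred : Reduced v
      · rw [loop hb hc hdisj (m + 1) v p hlen hred hm hend]
        exact FreeGroup.one_eq_mk.symm
      · obtain ⟨l₁, pr, l₂, hsplit⟩ := not_reduced_split hred
        have hmkeq : FreeGroup.mk v = FreeGroup.mk (l₁ ++ l₂) := by
          rw [hsplit]
          exact Quot.sound FreeGroup.Red.Step.not
        subst hsplit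
        rw [allMoving_append] at hm
        obtain ⟨hm₁, hmv₁, hmv₂, hm₂⟩ := hm
        set z := wordApply b l₁ (c p) with hz
        have hflip : letterEval b (pr.1, !pr.2) (letterEval b pr z) = z := letterEval_flip pr z
        have hm' : AllMoving b (l₁ ++ l₂) (c p) := by
          rw [allMoving_append]
          refine ⟨hm₁, ?_⟩
          rw [← hz, ← hflip]
          exact hm₂
        have hend' : wordApply b (l₁ ++ l₂) (c p) = c p := by
          rw [wordApply_append, ← hz, ← hflip]
          rw [wordApply_append, ← hz] at hend
          simpa using hend
        have hlen' : (l₁ ++ l₂).length ≤ m := by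
          simp only [List.length_append, List.length_cons] at hlen ⊢
          omega
        rw [hmkeq]
        exact ihm (l₁ ++ l₂) p hlen' hm' hend'

end geom
end SlrAux
/-- For a geometrically fast set `B` of positive bumps with markers witnessing fastness:
if a word `w` over `B^±` evaluates to the identity homeomorphism, then for every point
`x` of the orbit `M⟨B⟩` of the markers, the simply local reduction `w_x` maps to the
trivial element of the free group (i.e., it freely reduces to the empty word). -/
theorem slr_of_identity_word_freely_trivial {n : ℕ}
    (b : Fin n → Homeo) (a d : Fin n → ℝ) (c : Fin n → unitInterval)
    (hb : ∀ i, IsPosBump (b i) (a i) (d i))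
    (hc : ∀ i, a i < (c i : ℝ) ∧ (c i : ℝ) < d i)
    (hdisj : ∀ p q : Fin n × Bool, p ≠ q →
      Disjoint (Foot (b p.1) (a p.1) (d p.1) (c p.1) p.2)
        (Foot (b q.1) (a q.1) (d q.1) (c q.1) q.2))
    (MB : Set unitInterval)
    (hMB : MB = {y | ∃ i, ∃ h ∈ Subgroup.closure (Set.range b), h (c i) = y})
    (w : List (Fin n × Bool))
    (hw : ∀ x : unitInterval, wordApply b w x = x) :
    ∀ x ∈ MB, FreeGroup.mk (slr b w x) = 1 := by
  classical
  intro x hx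
  rw [hMB] at hx
  obtain ⟨i, h, hmem, hxval⟩ := hx
  -- extract a word representing h
  have hword : ∃ u : List (Fin n × Bool), ∀ y, wordApply b u y = h y := by
    clear hxval
    induction hmem using Subgroup.closure_induction with
    | mem g hg =>
        obtain ⟨j, hj⟩ := hg
        exact ⟨[(j, true)], fun y => by simp [letterEval, hj]⟩
    | one => exact ⟨[], fun y => rfl⟩
    | mul g₁ g₂ _ _ ih₁ ih₂ =>
        obtain ⟨u₁, hu₁⟩ := ih₁
        obtain ⟨u₂, hu₂⟩ := ih₂
        exact ⟨u₂ ++ u₁, fun y => by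
          rw [SlrAux.wordApply_append, hu₂, hu₁]; rfl⟩
    | inv g _ ih =>
        obtain ⟨u, hu⟩ := ih
        refine ⟨FreeGroup.invRev u, fun y => ?_⟩
        have h1 : wordApply b u (g⁻¹ y) = y := by rw [hu]; simp
        conv_lhs => rw [← h1]
        exact SlrAux.wordApply_invRev u (g⁻¹ y)
  obtain ⟨u, hu⟩ := hword
  have hux : wordApply b u (c i) = x := by rw [hu]; exact hxval
  -- the conjugated word
  set v := u ++ (w ++ FreeGroup.invRev u) with hv
  have hvend : wordApply b v (c i) = c i := by
    rw [hv, SlrAux.wordApply_append, SlrAux.wordApply_append, hux, hw x, ← hux]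
    exact SlrAux.wordApply_invRev u (c i)
  have hmk : FreeGroup.mk (slr b v (c i)) = 1 := by
    refine SlrAux.marker_mk hb hc hdisj (slr b v (c i)).length (slr b v (c i)) i le_rfl
      (SlrAux.allMoving_slr v (c i)) ?_
    rw [SlrAux.wordApply_slr]
    exact hvend
  have hslr : slr b v (c i) =
      slr b u (c i) ++ (slr b w x ++ FreeGroup.invRev (slr b u (c i))) := by
    rw [hv, SlrAux.slr_append, SlrAux.slr_append, hux, hw x, ← hux,
      SlrAux.slr_invRev]
  rw [hslr, ← FreeGroup.mul_mk, ← FreeGroup.mul_mk, ← FreeGroup.inv_mk] at hmk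
  set A := FreeGroup.mk (slr b u (c i))
  set T := FreeGroup.mk (slr b w x)
  have : T = A⁻¹ * (A * (T * A⁻¹)) * A := by group
  rw [this, hmk]
  group
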